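/- Let Γ be a p×k real matrix of full column rank k, and define G_s as the p(p+1)/2 × k matrix with rows indexed by pairs (j,l), 1 ≤ j ≤ l ≤ p, and entries G_{(j,l),h} = γ_{jh} γ_{lh}. If for binary vectors ψ, ψ̃ ∈ {0,1}^k we have Γ diag(ψ) Γᵀ = Γ diag(ψ̃) Γᵀ and rank(G_s) = k, then ψ = ψ̃. -/
import Mathlib


open Matrix

theorem sparsity_pattern_unique {p k : ℕ}
    (Γ : Matrix (Fin p) (Fin k) ℝ) (hΓ : Γ.rank = k)
    (Gs : Matrix {pr : Fin p × Fin p // pr.1 ≤ pr.2} (Fin k) ℝ)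
    (hGs : ∀ (jl : {pr : Fin p × Fin p // pr.1 ≤ pr.2}) (h : Fin k),
      Gs jl h = Γ jl.1.1 h * Γ jl.1.2 h)
    (hrank : Gs.rank = k)
    (ψ ψ' : Fin k → ℝ)
    (hψ : ∀ h, ψ h = 0 ∨ ψ h = 1) (hψ' : ∀ h, ψ' h = 0 ∨ ψ' h = 1)
    (heq : Γ * Matrix.diagonal ψ * Γ.transpose = Γ * Matrix.diagonal ψ' * Γ.transpose) :
    ψ = ψ' := by
  -- Gs.mulVec is injective since rank Gs = k
  have hrn := Gs.mulVecLin.finrank_range_add_finrank_ker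
  rw [Matrix.rank] at hrank
  rw [hrank, Module.finrank_fintype_fun_eq_card, Fintype.card_fin] at hrn
  have hker0 : Module.finrank ℝ (LinearMap.ker Gs.mulVecLin) = 0 := by omega
  have hker : LinearMap.ker Gs.mulVecLin = ⊥ := Submodule.finrank_eq_zero.mp hker0
  have hinj : Function.Injective Gs.mulVecLin := LinearMap.ker_eq_bot.mp hker
  apply hinj
  show Gs.mulVec ψ = Gs.mulVec ψ'
  funext jl
  have h2 := congrFun (congrFun heq jl.1.1) jl.1.2
  simp only [Matrix.mul_apply, Matrix.mul_diagonal, Matrix.transpose_apply, Matrix.diagonal_apply, Finset.mul_sum, Finset.sum_mul, mul_ite, ite_mul, mul_zero, zero_mul, Finset.sum_ite_eq, Finset.sum_ite_eq', Finset.mem_univ, if_true] at h2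
  simp only [Matrix.mulVec, dotProduct, hGs]
  calc ∑ h, Γ jl.1.1 h * Γ jl.1.2 h * ψ h
      = ∑ h, Γ jl.1.1 h * ψ h * Γ jl.1.2 h := by
        apply Finset.sum_congr rfl; intros; ring
    _ = ∑ h, Γ jl.1.1 h * ψ' h * Γ jl.1.2 h := h2
    _ = ∑ h, Γ jl.1.1 h * Γ jl.1.2 h * ψ' h := by
        apply Finset.sum_congr rfl; intros; ring
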